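/- Let φ be a hitting CNF formula with clause set 𝒞 over n variables, where clause C mentions the variable set vars(C). Then the number of assignments that falsify at least one clause of φ equals ∑_{C ∈ 𝒞} 2^{n − |vars(C)|}. Consequently, φ is satisfiable if and only if ∑_{C ∈ 𝒞} 2^{n − |vars(C)|} < 2^n. -/

import Mathlib

open scoped Classical

lemma count_ext_eq {V : Type*} [Fintype V] [DecidableEq V] (S : Finset V) (g : V → Bool) :
    (Finset.univ.filter (fun σ : V → Bool => ∀ x ∈ S, σ x = g x)).card
      = 2 ^ (Fintype.card V - S.card) := by
  have h1 : (Finset.univ.filter (fun σ : V → Bool => ∀ x ∈ S, σ x = g x)).card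
      = Fintype.card {σ : V → Bool // ∀ x ∈ S, σ x = g x} := by
    rw [Fintype.card_subtype]
  rw [h1]
  have e : {σ : V → Bool // ∀ x ∈ S, σ x = g x} ≃ ((Sᶜ : Finset V) → Bool) :=
    { toFun := fun σ x => σ.1 x.1
      invFun := fun f => ⟨fun x => if h : x ∈ S then g x else f ⟨x, by simp [h]⟩,
        fun x hx => by simp [hx]⟩
      left_inv := by
        rintro ⟨σ, hσ⟩
        ext x
        by_cases h : x ∈ S <;> simp [h, hσ x]
      right_inv := by
        intro f
        ext ⟨x, hx⟩
        have : x ∉ S := by simpa using hx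
        simp [this] }
  rw [Fintype.card_congr e]
  simp [Finset.card_compl]

theorem hitting_count_falsifying_and_satisfiable_iff
    {V : Type*} [Fintype V] [DecidableEq V]
    (𝒞 : Finset (Finset V × Finset V))
    (hdisj : ∀ C ∈ 𝒞, Disjoint C.1 C.2)
    (hhit : ∀ C ∈ 𝒞, ∀ C' ∈ 𝒞, C ≠ C' → (C.1 ∩ C'.2) ∪ (C.2 ∩ C'.1) ≠ ∅) :
    (Finset.univ.filter
        (fun σ : V → Bool => ∃ C ∈ 𝒞,
          (∀ x ∈ C.1, σ x = false) ∧ (∀ x ∈ C.2, σ x = true))).card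
      = ∑ C ∈ 𝒞, 2 ^ (Fintype.card V - (C.1 ∪ C.2).card) ∧
    ((∃ σ : V → Bool, ∀ C ∈ 𝒞,
        ¬((∀ x ∈ C.1, σ x = false) ∧ (∀ x ∈ C.2, σ x = true))) ↔
      ∑ C ∈ 𝒞, 2 ^ (Fintype.card V - (C.1 ∪ C.2).card) < 2 ^ Fintype.card V) := by
  set F := Finset.univ.filter
      (fun σ : V → Bool => ∃ C ∈ 𝒞,
        (∀ x ∈ C.1, σ x = false) ∧ (∀ x ∈ C.2, σ x = true)) with hF
  have hFb : F = 𝒞.biUnion (fun C => Finset.univ.filter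
      (fun σ : V → Bool => (∀ x ∈ C.1, σ x = false) ∧ (∀ x ∈ C.2, σ x = true))) := by
    ext σ
    simp [hF]
  have hcard : F.card = ∑ C ∈ 𝒞, 2 ^ (Fintype.card V - (C.1 ∪ C.2).card) := by
    rw [hFb, Finset.card_biUnion]
    · apply Finset.sum_congr rfl
      intro C hC
      have := count_ext_eq (C.1 ∪ C.2) (fun x => if x ∈ C.2 then true else false)
      rw [← this]
      congr 1
      ext σ
      simp only [Finset.mem_filter, Finset.mem_univ, true_and, Finset.mem_union]
      constructor
      · rintro ⟨h1, h2⟩ x hx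
        rcases hx with hx | hx
        · have : x ∉ C.2 := fun h => Finset.disjoint_left.1 (hdisj C hC) hx h
          simp [this, h1 x hx]
        · simp [hx, h2 x hx]
      · intro h
        constructor
        · intro x hx
          have : x ∉ C.2 := fun h' => Finset.disjoint_left.1 (hdisj C hC) hx h'
          have h2 := h x (Or.inl hx)
          simpa [this] using h2
        · intro x hx
          have := h x (Or.inr hx)
          simpa [hx] using this
    · intro C hC C' hC' hne
      rw [Function.onFun, Finset.disjoint_left]
      intro σ hσ hσ'
      simp only [Finset.mem_filter, Finset.mem_univ, true_and] at hσ hσ'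
      have hne' := hhit C hC C' hC' hne
      rw [← Finset.nonempty_iff_ne_empty] at hne'
      obtain ⟨x, hx⟩ := hne'
      rcases Finset.mem_union.1 hx with hx | hx
      · obtain ⟨h1, h2⟩ := Finset.mem_inter.1 hx
        have := hσ.1 x h1
        have := hσ'.2 x h2
        simp_all
      · obtain ⟨h1, h2⟩ := Finset.mem_inter.1 hx
        have := hσ.2 x h1
        have := hσ'.1 x h2
        simp_all
  refine ⟨hcard, ?_⟩
  rw [← hcard]
  constructor
  · rintro ⟨σ, hσ⟩
    have hσF : σ ∉ F := by
      simp only [hF, Finset.mem_filter, Finset.mem_univ, true_and]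
      rintro ⟨C, hC, h⟩
      exact hσ C hC h
    have : F ⊂ Finset.univ := Finset.ssubset_univ_iff.2 (fun h => hσF (h ▸ Finset.mem_univ σ))
    have := Finset.card_lt_card this
    simpa [Fintype.card_fun] using this
  · intro hlt
    by_contra h
    push_neg at h
    have : F = Finset.univ := by
      apply Finset.eq_univ_iff_forall.2
      intro σ
      simp only [hF, Finset.mem_filter, Finset.mem_univ, true_and]
      exact h σ
    rw [this] at hlt
    simp [Fintype.card_fun] at hlt
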